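/- arXiv:2211.08041 — 3 statements merged into one kernel-verified Lean document; each statement's English description precedes it below -/
import Mathlib

section
/- Define Υ(x) = (2/√π)(x^{1/2} + x^{-1/2}) − 2(x + 3/2) e^x erfc(√x) for x > 0. Then as x → ∞, Υ(x) = (3/(2√π)) x^{-5/2} + O(x^{-7/2}); i.e., there exist C, x₀ > 0 such that |Υ(x) − (3/(2√π)) x^{-5/2}| ≤ C x^{-7/2} for all x ≥ x₀. -/
open Real MeasureTheory Set

section helpers
open Filter

/-- Auxiliary: the fourth partial sum of the asymptotic expansion of the Gaussian tail. -/
noncomputable def gFun (t : ℝ) : ℝ :=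
  Real.exp (-t ^ 2) * (8 * t ^ 6 - 4 * t ^ 4 + 6 * t ^ 2 - 15) / (16 * t ^ 7)

lemma gFun_hasDerivAt {t : ℝ} (ht : t ≠ 0) :
    HasDerivAt gFun (Real.exp (-t ^ 2) * (-1 + 105 / (16 * t ^ 8))) t := by
  have hexp : HasDerivAt (fun t : ℝ => Real.exp (-t ^ 2)) (Real.exp (-t ^ 2) * (-2 * t)) t := by
    have h1 : HasDerivAt (fun t : ℝ => -t ^ 2) (-2 * t) t := by
      exact ((hasDerivAt_pow 2 t).neg).congr_deriv (by ring)
    simpa [mul_comm, Function.comp_def] using (Real.hasDerivAt_exp (-t ^ 2)).comp t h1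
  have hN : HasDerivAt (fun t : ℝ => 8 * t ^ 6 - 4 * t ^ 4 + 6 * t ^ 2 - 15)
      (48 * t ^ 5 - 16 * t ^ 3 + 12 * t) t := by
    have := (((hasDerivAt_pow 6 t).const_mul 8).sub ((hasDerivAt_pow 4 t).const_mul 4)).add
      ((hasDerivAt_pow 2 t).const_mul 6)
    have h2 := this.sub_const 15
    refine h2.congr_deriv ?_
    ring
  have hD : HasDerivAt (fun t : ℝ => 16 * t ^ 7) (112 * t ^ 6) t := by
    have := (hasDerivAt_pow 7 t).const_mul 16
    refine this.congr_deriv ?_; ring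
  have h := ((hexp.mul hN).div hD (by positivity))
  refine h.congr_deriv ?_
  have h16 : (16 : ℝ) * t ^ 7 ≠ 0 := by positivity
  simp only [Pi.mul_apply]
  field_simp
  ring

lemma g1_hasDerivAt {t : ℝ} (ht : t ≠ 0) :
    HasDerivAt (fun t : ℝ => -(Real.exp (-t ^ 2) / (2 * t)))
      (Real.exp (-t ^ 2) * (1 + 1 / (2 * t ^ 2))) t := by
  have hexp : HasDerivAt (fun t : ℝ => Real.exp (-t ^ 2)) (Real.exp (-t ^ 2) * (-2 * t)) t := by
    have h1 : HasDerivAt (fun t : ℝ => -t ^ 2) (-2 * t) t := by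
      exact ((hasDerivAt_pow 2 t).neg).congr_deriv (by ring)
    simpa [mul_comm, Function.comp_def] using (Real.hasDerivAt_exp (-t ^ 2)).comp t h1
  have hD : HasDerivAt (fun t : ℝ => 2 * t) 2 t := by
    simpa using (hasDerivAt_id t).const_mul 2
  have h := (hexp.div hD (by simpa using ht)).neg
  refine h.congr_deriv ?_
  have h2 : (2 : ℝ) * t ≠ 0 := by simpa using ht
  field_simp
  ring

lemma gauss_integrableOn (y : ℝ) :
    IntegrableOn (fun t : ℝ => Real.exp (-t ^ 2)) (Ioi y) := by
  have := integrable_exp_neg_mul_sq (by norm_num : (0:ℝ) < 1)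
  simpa using this.integrableOn

lemma gauss_mul_integrableOn {y : ℝ} (c : ℝ → ℝ) (M : ℝ)
    (hc : ContinuousOn c (Ioi y)) (hM : ∀ t ∈ Ioi y, |c t| ≤ M) :
    IntegrableOn (fun t : ℝ => Real.exp (-t ^ 2) * c t) (Ioi y) := by
  apply Integrable.mono' ((gauss_integrableOn y).const_mul M)
  · exact (Real.continuous_exp.comp (continuous_pow 2).neg).continuousOn.mul hc
      |>.aestronglyMeasurable measurableSet_Ioi
  · refine (ae_restrict_iff' measurableSet_Ioi).2 (ae_of_all _ fun t ht => ?_)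
    rw [Real.norm_eq_abs, abs_mul, abs_of_pos (Real.exp_pos _)]
    calc Real.exp (-t ^ 2) * |c t| ≤ Real.exp (-t ^ 2) * M :=
          mul_le_mul_of_nonneg_left (hM t ht) (Real.exp_pos _).le
      _ = M * Real.exp (-t ^ 2) := by ring

lemma sq_pow_mul_exp_tendsto (k : ℕ) :
    Tendsto (fun t : ℝ => t ^ (2 * k) * Real.exp (-t ^ 2)) atTop (nhds 0) := by
  have h1 := (tendsto_pow_mul_exp_neg_atTop_nhds_zero k).comp
    (tendsto_pow_atTop (two_ne_zero) : Tendsto (fun t : ℝ => t ^ 2) atTop atTop)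
  refine h1.congr fun t => ?_
  simp [Function.comp, pow_mul]

lemma gFun_tendsto : Tendsto gFun atTop (nhds 0) := by
  have hnum : Tendsto (fun t : ℝ =>
      Real.exp (-t ^ 2) * (8 * t ^ 6 - 4 * t ^ 4 + 6 * t ^ 2 - 15)) atTop (nhds 0) := by
    have h6 := (sq_pow_mul_exp_tendsto 3).const_mul (8 : ℝ)
    have h4 := (sq_pow_mul_exp_tendsto 2).const_mul (4 : ℝ)
    have h2 := (sq_pow_mul_exp_tendsto 1).const_mul (6 : ℝ)
    have h0 := (sq_pow_mul_exp_tendsto 0).const_mul (15 : ℝ)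
    have := ((h6.sub h4).add h2).sub h0
    simp only [mul_zero, sub_zero, add_zero] at this
    refine this.congr fun t => ?_
    norm_num; ring
  have hden : Tendsto (fun t : ℝ => 16 * t ^ 7) atTop atTop :=
    (tendsto_pow_atTop (by norm_num)).const_mul_atTop (by norm_num)
  exact hnum.div_atTop hden

lemma g1_tendsto : Tendsto (fun t : ℝ => -(Real.exp (-t ^ 2) / (2 * t))) atTop (nhds 0) := by
  have h : Tendsto (fun t : ℝ => Real.exp (-t ^ 2) / (2 * t)) atTop (nhds 0) := by
    have hexp : Tendsto (fun t : ℝ => Real.exp (-t ^ 2)) atTop (nhds 0) := by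
      simpa using sq_pow_mul_exp_tendsto 0
    exact hexp.div_atTop ((tendsto_id.const_mul_atTop (by norm_num)))
  simpa using h.neg

lemma int_c8 {y : ℝ} (hy : 1 ≤ y) :
    IntegrableOn (fun t : ℝ => Real.exp (-t ^ 2) * (105 / (16 * t ^ 8))) (Ioi y) := by
  have hy0 : (0:ℝ) < y := lt_of_lt_of_le one_pos hy
  refine gauss_mul_integrableOn _ (105 / (16 * y ^ 8)) ?_ ?_
  · exact continuousOn_const.div (by fun_prop) fun t ht => by
      have : (0:ℝ) < t := lt_trans hy0 ht; positivity
  · intro t ht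
    have htpos : y < t := ht
    have ht0 : (0:ℝ) < t := lt_trans hy0 htpos
    rw [abs_of_pos (by positivity)]
    gcongr

/-- The key expansion with explicit error bound. -/
lemma gauss_tail_expansion {y : ℝ} (hy : 1 ≤ y) :
    gFun y ≤ (∫ t in Ioi y, Real.exp (-t ^ 2)) ∧
    (∫ t in Ioi y, Real.exp (-t ^ 2)) ≤ gFun y + (105 / 32) * Real.exp (-y ^ 2) / y ^ 9 := by
  have hy0 : (0:ℝ) < y := lt_of_lt_of_le one_pos hy
  -- integrability of the full derivative
  have hc1 : IntegrableOn (fun t : ℝ => Real.exp (-t ^ 2) * (-1 + 105 / (16 * t ^ 8)))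
      (Ioi y) := by
    refine gauss_mul_integrableOn _ (1 + 105 / (16 * y ^ 8)) ?_ ?_
    · exact continuousOn_const.add (continuousOn_const.div (by fun_prop) fun t ht => by
        have : (0:ℝ) < t := lt_trans hy0 ht; positivity)
    · intro t ht
      have htpos : y < t := ht
      have ht0 : (0:ℝ) < t := lt_trans hy0 htpos
      have h1 : (0:ℝ) ≤ 105 / (16 * t ^ 8) := by positivity
      have h2 : 105 / (16 * t ^ 8) ≤ 105 / (16 * y ^ 8) := by gcongr
      rw [abs_le]
      constructor <;> nlinarith [div_nonneg (by norm_num : (0:ℝ) ≤ 105)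
        (by positivity : (0:ℝ) ≤ 16 * y ^ 8)]
  -- FTC identity for gFun
  have hident : (∫ t in Ioi y, Real.exp (-t ^ 2) * (-1 + 105 / (16 * t ^ 8))) = -gFun y := by
    have := integral_Ioi_of_hasDerivAt_of_tendsto'
      (f := gFun) (f' := fun t => Real.exp (-t ^ 2) * (-1 + 105 / (16 * t ^ 8)))
      (a := y) (m := 0)
      (fun t ht => gFun_hasDerivAt (by
        have : y ≤ t := ht
        exact ne_of_gt (lt_of_lt_of_le hy0 this)))
      hc1 gFun_tendsto
    simpa using this
  -- split the integral
  have hsplit : (∫ t in Ioi y, Real.exp (-t ^ 2)) =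
      gFun y + ∫ t in Ioi y, Real.exp (-t ^ 2) * (105 / (16 * t ^ 8)) := by
    have h2 : (∫ t in Ioi y, Real.exp (-t ^ 2)) =
        (∫ t in Ioi y, Real.exp (-t ^ 2) * (105 / (16 * t ^ 8)))
        - ∫ t in Ioi y, Real.exp (-t ^ 2) * (-1 + 105 / (16 * t ^ 8)) := by
      rw [← integral_sub (int_c8 hy) hc1]
      apply setIntegral_congr_fun measurableSet_Ioi
      intro t ht
      ring
    rw [h2, hident]; ring
  -- bounds on the remainder term
  have hrem_nonneg : 0 ≤ ∫ t in Ioi y, Real.exp (-t ^ 2) * (105 / (16 * t ^ 8)) := by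
    apply setIntegral_nonneg measurableSet_Ioi
    intro t ht
    have ht0 : (0:ℝ) < t := lt_trans hy0 ht
    positivity
  -- the one-term bound ∫ exp(-t²) ≤ exp(-y²)/(2y), applied at general base z ≥ 1
  have honeterm : ∀ z : ℝ, 1 ≤ z →
      (∫ t in Ioi z, Real.exp (-t ^ 2)) ≤ Real.exp (-z ^ 2) / (2 * z) := by
    intro z hz
    have hz0 : (0:ℝ) < z := lt_of_lt_of_le one_pos hz
    have hint : IntegrableOn (fun t : ℝ => Real.exp (-t ^ 2) * (1 + 1 / (2 * t ^ 2)))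
        (Ioi z) := by
      refine gauss_mul_integrableOn _ (1 + 1 / (2 * z ^ 2)) ?_ ?_
      · exact continuousOn_const.add (continuousOn_const.div (by fun_prop) fun t ht => by
          have : (0:ℝ) < t := lt_trans hz0 ht; positivity)
      · intro t ht
        have ht0 : (0:ℝ) < t := lt_trans hz0 ht
        rw [abs_of_pos (by positivity)]
        gcongr
        exact le_of_lt ht
    have hid : (∫ t in Ioi z, Real.exp (-t ^ 2) * (1 + 1 / (2 * t ^ 2)))
        = Real.exp (-z ^ 2) / (2 * z) := by
      have := integral_Ioi_of_hasDerivAt_of_tendsto'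
        (f := fun t : ℝ => -(Real.exp (-t ^ 2) / (2 * t)))
        (f' := fun t => Real.exp (-t ^ 2) * (1 + 1 / (2 * t ^ 2)))
        (a := z) (m := 0)
        (fun t ht => g1_hasDerivAt (ne_of_gt (lt_of_lt_of_le hz0 ht)))
        hint g1_tendsto
      simpa using this
    rw [← hid]
    apply setIntegral_mono_on (gauss_integrableOn z) hint measurableSet_Ioi
    intro t ht
    have ht0 : (0:ℝ) < t := lt_trans hz0 ht
    have he := (Real.exp_pos (-t ^ 2)).le
    have h2 : (0:ℝ) ≤ 1 / (2 * t ^ 2) := by positivity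
    nlinarith
  have hrem_le : (∫ t in Ioi y, Real.exp (-t ^ 2) * (105 / (16 * t ^ 8)))
      ≤ (105 / 32) * Real.exp (-y ^ 2) / y ^ 9 := by
    have h1 : (∫ t in Ioi y, Real.exp (-t ^ 2) * (105 / (16 * t ^ 8)))
        ≤ ∫ t in Ioi y, Real.exp (-t ^ 2) * (105 / (16 * y ^ 8)) := by
      apply setIntegral_mono_on (int_c8 hy)
        ((gauss_integrableOn y).mul_const _) measurableSet_Ioi
      intro t ht
      have ht0 : (0:ℝ) < t := lt_trans hy0 ht
      have := Real.exp_pos (-t ^ 2)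
      gcongr
      exact le_of_lt ht
    have h2 : (∫ t in Ioi y, Real.exp (-t ^ 2) * (105 / (16 * y ^ 8)))
        = (105 / (16 * y ^ 8)) * ∫ t in Ioi y, Real.exp (-t ^ 2) := by
      rw [integral_mul_const]; ring
    have h3 := honeterm y hy
    calc (∫ t in Ioi y, Real.exp (-t ^ 2) * (105 / (16 * t ^ 8)))
        ≤ (105 / (16 * y ^ 8)) * ∫ t in Ioi y, Real.exp (-t ^ 2) := by rw [← h2]; exact h1
      _ ≤ (105 / (16 * y ^ 8)) * (Real.exp (-y ^ 2) / (2 * y)) := by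
          gcongr
      _ = (105 / 32) * Real.exp (-y ^ 2) / y ^ 9 := by
          field_simp
          ring
  constructor
  · rw [hsplit]; linarith
  · rw [hsplit]; linarith

end helpers

/-- The complementary error function `erfc y = (2/√π) ∫_y^∞ e^{-t²} dt`. -/
noncomputable def erfc (y : ℝ) : ℝ :=
  (2 / Real.sqrt π) * ∫ t in Set.Ioi y, Real.exp (-t ^ 2)

/-- `Υ(x) = (2/√π)(x^{1/2} + x^{-1/2}) − 2(x + 3/2) e^x erfc(√x)`. -/
noncomputable def Upsilon (x : ℝ) : ℝ :=
  (2 / Real.sqrt π) * (x ^ ((1 : ℝ) / 2) + x ^ (-(1 / 2) : ℝ))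
    - 2 * (x + 3 / 2) * Real.exp x * erfc (Real.sqrt x)

set_option maxHeartbeats 1600000 in
theorem Upsilon_asymptotic_atTop :
    ∃ C x₀ : ℝ, 0 < C ∧ 0 < x₀ ∧ ∀ x ≥ x₀,
      |Upsilon x - (3 / (2 * Real.sqrt π)) * x ^ (-(5 / 2) : ℝ)|
        ≤ C * x ^ (-(7 / 2) : ℝ) := by
  refine ⟨40, 1, by norm_num, by norm_num, fun x hx => ?_⟩
  have hx0 : (0:ℝ) < x := lt_of_lt_of_le one_pos hx
  set s := Real.sqrt x with hs
  have hs1 : 1 ≤ s := by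
    rw [hs, show (1:ℝ) = Real.sqrt 1 by simp]
    exact Real.sqrt_le_sqrt hx
  have hs0 : (0:ℝ) < s := lt_of_lt_of_le one_pos hs1
  have hsx : s ^ 2 = x := Real.sq_sqrt hx0.le
  have hπ : (0:ℝ) < Real.sqrt π := Real.sqrt_pos.2 Real.pi_pos
  -- rewrite rpow's in terms of s
  have hhalf : x ^ ((1:ℝ)/2) = s := by
    rw [hs, Real.sqrt_eq_rpow]
  have hrpow : ∀ n : ℕ, x ^ (-(n / 2) : ℝ) = (s ^ n)⁻¹ := by
    intro n
    rw [Real.rpow_neg hx0.le, hs, Real.sqrt_eq_rpow,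
      ← Real.rpow_natCast (x ^ ((1:ℝ)/2)) n, ← Real.rpow_mul hx0.le, mul_comm, mul_one_div]
  have h1 : x ^ (-(1/2) : ℝ) = (s ^ 1)⁻¹ := by
    have := hrpow 1; push_cast at this; convert this using 2 <;> norm_num
  have h5 : x ^ (-(5/2) : ℝ) = (s ^ 5)⁻¹ := by
    have := hrpow 5; push_cast at this; convert this using 2 <;> norm_num
  have h7 : x ^ (-(7/2) : ℝ) = (s ^ 7)⁻¹ := by
    have := hrpow 7; push_cast at this; convert this using 2 <;> norm_num
  -- tail expansion
  obtain ⟨hlow, hhigh⟩ := gauss_tail_expansion hs1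
  set I := ∫ t in Ioi s, Real.exp (-t ^ 2) with hI
  set F := I - gFun s with hF
  have hFnn : 0 ≤ F := by rw [hF]; linarith
  have hFle : F ≤ (105 / 32) * Real.exp (-s ^ 2) / s ^ 9 := by rw [hF]; linarith
  have hIeq : I = gFun s + F := by rw [hF]; ring
  -- compute e^x * gFun s
  have hexp : Real.exp x * Real.exp (-s ^ 2) = 1 := by
    rw [← Real.exp_add, hsx]; simp
  have hUps : Upsilon x = (2 / Real.sqrt π) * (s + (s ^ 1)⁻¹)
      - 2 * (x + 3 / 2) * Real.exp x * ((2 / Real.sqrt π) * (gFun s + F)) := by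
    rw [Upsilon, erfc, hhalf, h1, ← hs, ← hI, hIeq]
  have hgFun : gFun s = Real.exp (-s ^ 2) * (8 * s ^ 6 - 4 * s ^ 4 + 6 * s ^ 2 - 15)
      / (16 * s ^ 7) := rfl
  -- main algebraic identity
  have hmain : Upsilon x - (3 / (2 * Real.sqrt π)) * (s ^ 5)⁻¹
      = (45 / (8 * Real.sqrt π)) * (s ^ 7)⁻¹
        - (4 / Real.sqrt π) * (x + 3 / 2) * (Real.exp x * F) := by
    have hEg : Real.exp x * gFun s
        = (8 * s ^ 6 - 4 * s ^ 4 + 6 * s ^ 2 - 15) / (16 * s ^ 7) := by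
      rw [hgFun, show Real.exp x * (Real.exp (-s ^ 2)
          * (8 * s ^ 6 - 4 * s ^ 4 + 6 * s ^ 2 - 15) / (16 * s ^ 7))
        = (Real.exp x * Real.exp (-s ^ 2))
          * ((8 * s ^ 6 - 4 * s ^ 4 + 6 * s ^ 2 - 15) / (16 * s ^ 7)) from by ring,
        hexp, one_mul]
    rw [hUps, show (2 / Real.sqrt π) * (s + (s ^ 1)⁻¹)
        - 2 * (x + 3 / 2) * Real.exp x * ((2 / Real.sqrt π) * (gFun s + F))
      = (2 / Real.sqrt π) * (s + (s ^ 1)⁻¹)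
        - (4 / Real.sqrt π) * (x + 3 / 2) * (Real.exp x * gFun s)
        - (4 / Real.sqrt π) * (x + 3 / 2) * (Real.exp x * F) from by ring,
      hEg, ← hsx]
    have hsne : s ≠ 0 := ne_of_gt hs0
    have hπne : Real.sqrt π ≠ 0 := ne_of_gt hπ
    field_simp
    ring
  -- bound the remainder
  have hxs : x + 3 / 2 ≤ (5 / 2) * s ^ 2 := by
    rw [← hsx]; nlinarith
  have hexpF : Real.exp x * F ≤ (105 / 32) / s ^ 9 := by
    calc Real.exp x * F ≤ Real.exp x * ((105 / 32) * Real.exp (-s ^ 2) / s ^ 9) := by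
          gcongr
      _ = (105 / 32) * (Real.exp x * Real.exp (-s ^ 2)) / s ^ 9 := by ring
      _ = (105 / 32) / s ^ 9 := by rw [hexp]; ring
  have hexpFnn : 0 ≤ Real.exp x * F := mul_nonneg (Real.exp_pos x).le hFnn
  have hterm : (4 / Real.sqrt π) * (x + 3 / 2) * (Real.exp x * F)
      ≤ (4 / Real.sqrt π) * ((5 / 2) * s ^ 2) * ((105 / 32) / s ^ 9) := by
    apply mul_le_mul
    · apply mul_le_mul_of_nonneg_left hxs (by positivity)
    · exact hexpF
    · exact hexpFnn
    · positivity
  have htermnn : 0 ≤ (4 / Real.sqrt π) * (x + 3 / 2) * (Real.exp x * F) := by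
    apply mul_nonneg (mul_nonneg (by positivity) (by nlinarith)) hexpFnn
  have hsimp : (4 / Real.sqrt π) * ((5 / 2) * s ^ 2) * ((105 / 32) / s ^ 9)
      = (525 / (16 * Real.sqrt π)) * (s ^ 7)⁻¹ := by
    field_simp
    ring
  -- π ≥ 1 hence √π ≥ 1
  have hπ1 : (1:ℝ) ≤ Real.sqrt π := by
    nlinarith [Real.sq_sqrt Real.pi_pos.le, Real.sqrt_nonneg π, Real.pi_gt_three]
  have hs7 : (0:ℝ) < (s ^ 7)⁻¹ := by positivity
  have hc1' : (525 : ℝ) / (16 * Real.sqrt π) ≤ 40 := by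
    rw [div_le_iff₀ (by positivity)]
    nlinarith
  have hc2' : (45 : ℝ) / (8 * Real.sqrt π) ≤ 40 := by
    rw [div_le_iff₀ (by positivity)]
    nlinarith
  have hc2nn : (0:ℝ) ≤ 45 / (8 * Real.sqrt π) := by positivity
  have hT := hterm
  rw [hsimp] at hT
  rw [h5, h7, hmain, abs_le]
  constructor
  · have h525 := mul_le_mul_of_nonneg_right hc1' hs7.le
    have h45nn := mul_nonneg hc2nn hs7.le
    linarith
  · have h45 := mul_le_mul_of_nonneg_right hc2' hs7.le
    linarith [htermnn]
end

section
/- Let Υ(x) = (2/√π)(x^{1/2} + x^{-1/2}) − 2(x + 3/2) e^x erfc(√x) for x > 0, and define f(u) = √π · u² · ∫_{3u/2}^∞ √y · Υ(y) dy for u > 0. Then f is a well-defined (the integral converges absolutely), continuous, strictly positive function on (0,∞), and u^{-1} f(u) → 1 as u → ∞. -/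
open Real MeasureTheory Set Filter

/-- `f(u) = √π u² ∫_{3u/2}^∞ √y Υ(y) dy`. -/
noncomputable def fFun (u : ℝ) : ℝ :=
  Real.sqrt π * u ^ 2 * ∫ y in Set.Ioi (3 * u / 2), Real.sqrt y * Upsilon y
namespace FFunAux

noncomputable def II (x : ℝ) : ℝ := ∫ t in Set.Ioi x, Real.exp (-t ^ 2)

lemma gauss_cont : Continuous (fun t : ℝ => Real.exp (-t ^ 2)) := by continuity

lemma gauss_integrable : Integrable (fun t : ℝ => Real.exp (-t ^ 2)) := by
  simpa using integrable_exp_neg_mul_sq (b := 1) one_pos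

lemma II_eq (x : ℝ) : II x = II 0 - ∫ t in (0:ℝ)..x, Real.exp (-t ^ 2) := by
  have h := intervalIntegral.integral_Iic_add_Ioi (b := x)
    (f := fun t : ℝ => Real.exp (-t ^ 2)) (μ := volume)
    gauss_integrable.integrableOn gauss_integrable.integrableOn
  have h0 := intervalIntegral.integral_Iic_add_Ioi (b := (0:ℝ))
    (f := fun t : ℝ => Real.exp (-t ^ 2)) (μ := volume)
    gauss_integrable.integrableOn gauss_integrable.integrableOn
  have hsub := intervalIntegral.integral_Iic_sub_Iic (a := (0:ℝ)) (b := x)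
    (f := fun t : ℝ => Real.exp (-t ^ 2)) (μ := volume)
    gauss_integrable.integrableOn gauss_integrable.integrableOn
  unfold II
  linarith

lemma II_hasDerivAt (x : ℝ) : HasDerivAt II (-(Real.exp (-x ^ 2))) x := by
  have h : HasDerivAt (fun u => ∫ t in (0:ℝ)..u, Real.exp (-t ^ 2))
      (Real.exp (-x ^ 2)) x :=
    intervalIntegral.integral_hasDerivAt_right
      gauss_integrable.intervalIntegrable
      (gauss_cont.stronglyMeasurableAtFilter _ _)
      gauss_cont.continuousAt
  have : HasDerivAt (fun u => II 0 - ∫ t in (0:ℝ)..u, Real.exp (-t ^ 2))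
      (-(Real.exp (-x ^ 2))) x := by
    exact ((hasDerivAt_const x (II 0)).sub h).congr_deriv (by ring)
  exact this.congr_of_eventuallyEq (Filter.Eventually.of_forall fun y => II_eq y)

lemma II_tendsto : Tendsto II atTop (nhds 0) := by
  have h := intervalIntegral_tendsto_integral_Ioi (a := (0:ℝ)) (μ := volume)
    (f := fun t : ℝ => Real.exp (-t ^ 2)) gauss_integrable.integrableOn
    (tendsto_id (α := ℝ))
  have h2 : Tendsto (fun x => II 0 - ∫ t in (0:ℝ)..x, Real.exp (-t ^ 2)) atTop
      (nhds (II 0 - II 0)) := (tendsto_const_nhds).sub h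
  simp only [sub_self] at h2
  exact h2.congr (fun x => (II_eq x).symm)


lemma phi_hasDerivAt {P P' : ℝ → ℝ} (hd : ∀ x > (0:ℝ), HasDerivAt P (P' x) x)
    {x : ℝ} (hx : 0 < x) :
    HasDerivAt (fun x => II x - Real.exp (-x ^ 2) * P x)
      (-(Real.exp (-x ^ 2)) * (1 - 2 * x * P x + P' x)) x := by
  have hexp : HasDerivAt (fun x : ℝ => Real.exp (-x ^ 2))
      (Real.exp (-x ^ 2) * (-(2 * x))) x := by
    have h0 : HasDerivAt (fun x : ℝ => -x ^ 2) (-(2 * x)) x := by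
      exact ((hasDerivAt_pow 2 x).neg).congr_deriv (by simp)
    exact h0.exp
  have h2 := hexp.mul (hd x hx)
  have h := (II_hasDerivAt x).sub h2
  refine h.congr_deriv ?_
  ring

lemma phi_tendsto {P : ℝ → ℝ}
    (hlim : Tendsto (fun x => Real.exp (-x ^ 2) * P x) atTop (nhds 0)) :
    Tendsto (fun x => II x - Real.exp (-x ^ 2) * P x) atTop (nhds 0) := by
  simpa using II_tendsto.sub hlim

lemma II_gt (P P' : ℝ → ℝ) (hd : ∀ x > (0:ℝ), HasDerivAt P (P' x) x)
    (hlim : Tendsto (fun x => Real.exp (-x ^ 2) * P x) atTop (nhds 0))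
    (hsign : ∀ x > (0:ℝ), 0 < 1 - 2 * x * P x + P' x) :
    ∀ x > (0:ℝ), Real.exp (-x ^ 2) * P x < II x := by
  set φ := fun x => II x - Real.exp (-x ^ 2) * P x with hφ
  have hanti : StrictAntiOn φ (Set.Ioi 0) := by
    apply strictAntiOn_of_deriv_neg (convex_Ioi 0)
    · exact fun x hx => ((phi_hasDerivAt hd hx).continuousAt).continuousWithinAt
    · intro x hx
      rw [interior_Ioi] at hx
      rw [(phi_hasDerivAt hd hx).deriv]
      exact mul_neg_of_neg_of_pos (neg_neg_iff_pos.mpr (Real.exp_pos _)) (hsign x hx)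
  intro x hx
  have hx1 : x + 1 ∈ Set.Ioi (0:ℝ) := by simp only [Set.mem_Ioi]; linarith
  have h1 : φ (x + 1) < φ x := hanti (Set.mem_Ioi.2 hx) hx1 (by linarith)
  have h2 : (0:ℝ) ≤ φ (x + 1) := by
    apply le_of_tendsto (phi_tendsto hlim)
    filter_upwards [eventually_gt_atTop (x + 1)] with y hy
    exact (hanti hx1 (by simp only [Set.mem_Ioi]; linarith) hy).le
  have : 0 < φ x := lt_of_le_of_lt h2 h1
  simpa [hφ, sub_pos] using this

lemma II_lt (P P' : ℝ → ℝ) (hd : ∀ x > (0:ℝ), HasDerivAt P (P' x) x)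
    (hlim : Tendsto (fun x => Real.exp (-x ^ 2) * P x) atTop (nhds 0))
    (hsign : ∀ x > (0:ℝ), 1 - 2 * x * P x + P' x < 0) :
    ∀ x > (0:ℝ), II x < Real.exp (-x ^ 2) * P x := by
  set φ := fun x => II x - Real.exp (-x ^ 2) * P x with hφ
  have hmono : StrictMonoOn φ (Set.Ioi 0) := by
    apply strictMonoOn_of_deriv_pos (convex_Ioi 0)
    · exact fun x hx => ((phi_hasDerivAt hd hx).continuousAt).continuousWithinAt
    · intro x hx
      rw [interior_Ioi] at hx
      rw [(phi_hasDerivAt hd hx).deriv]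
      exact mul_pos_of_neg_of_neg (by simpa using (Real.exp_pos (-x^2))) (hsign x hx)
  intro x hx
  have hx1 : x + 1 ∈ Set.Ioi (0:ℝ) := by simp only [Set.mem_Ioi]; linarith
  have h1 : φ x < φ (x + 1) := hmono (Set.mem_Ioi.2 hx) hx1 (by linarith)
  have h2 : φ (x + 1) ≤ 0 := by
    apply ge_of_tendsto (phi_tendsto hlim)
    filter_upwards [eventually_gt_atTop (x + 1)] with y hy
    exact (hmono hx1 (by simp only [Set.mem_Ioi]; linarith) hy).le
  have : φ x < 0 := lt_of_lt_of_le h1 h2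
  simpa [hφ, sub_neg] using this

lemma invpow_tendsto (n : ℕ) (hn : n ≠ 0) :
    Tendsto (fun x : ℝ => (x ^ n)⁻¹) atTop (nhds 0) :=
  tendsto_inv_atTop_zero.comp (tendsto_pow_atTop hn)

lemma exp_neg_sq_tendsto : Tendsto (fun x : ℝ => Real.exp (-x ^ 2)) atTop (nhds 0) := by
  have h2 : Tendsto (fun x : ℝ => x ^ 2) atTop atTop := tendsto_pow_atTop two_ne_zero
  have := Real.tendsto_exp_neg_atTop_nhds_zero.comp h2
  simpa [Function.comp] using this

lemma bound1 : ∀ x > (0:ℝ), Real.exp (-x ^ 2) * ((1/2) * (x ^ 1)⁻¹ - (1/4) * (x ^ 3)⁻¹) < II x := by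
  apply II_gt _ (fun x => -((1/2) * (x ^ 2)⁻¹) + (3/4) * (x ^ 4)⁻¹)
  · intro x hx
    have hne := ne_of_gt hx
    have h1 := ((hasDerivAt_pow 1 x).inv (pow_ne_zero 1 hne)).const_mul ((1:ℝ)/2)
    have h3 := ((hasDerivAt_pow 3 x).inv (pow_ne_zero 3 hne)).const_mul ((1:ℝ)/4)
    refine (h1.sub h3).congr_deriv ?_
    field_simp
    ring
  · have hP : Tendsto (fun x : ℝ => (1/2) * (x ^ 1)⁻¹ - (1/4) * (x ^ 3)⁻¹) atTop (nhds 0) := by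
      have := ((invpow_tendsto 1 one_ne_zero).const_mul ((1:ℝ)/2)).sub
        ((invpow_tendsto 3 three_ne_zero).const_mul ((1:ℝ)/4))
      simpa using this
    simpa using exp_neg_sq_tendsto.mul hP
  · intro x hx
    have hne := ne_of_gt hx
    have key : 1 - 2 * x * ((1/2) * (x ^ 1)⁻¹ - (1/4) * (x ^ 3)⁻¹)
        + (-((1/2) * (x ^ 2)⁻¹) + (3/4) * (x ^ 4)⁻¹) = (3/4) * (x ^ 4)⁻¹ := by
      field_simp
      ring
    rw [key]
    positivity

lemma bound2 : ∀ x > (0:ℝ), II x <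
    Real.exp (-x ^ 2) * ((1/2) * (x ^ 1)⁻¹ - (1/4) * (x ^ 3)⁻¹ + (3/8) * (x ^ 5)⁻¹) := by
  apply II_lt _ (fun x => -((1/2) * (x ^ 2)⁻¹) + (3/4) * (x ^ 4)⁻¹ - (15/8) * (x ^ 6)⁻¹)
  · intro x hx
    have hne := ne_of_gt hx
    have h1 := ((hasDerivAt_pow 1 x).inv (pow_ne_zero 1 hne)).const_mul ((1:ℝ)/2)
    have h3 := ((hasDerivAt_pow 3 x).inv (pow_ne_zero 3 hne)).const_mul ((1:ℝ)/4)
    have h5 := ((hasDerivAt_pow 5 x).inv (pow_ne_zero 5 hne)).const_mul ((3:ℝ)/8)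
    refine ((h1.sub h3).add h5).congr_deriv ?_
    field_simp
    ring
  · have hP : Tendsto (fun x : ℝ => (1/2) * (x ^ 1)⁻¹ - (1/4) * (x ^ 3)⁻¹ + (3/8) * (x ^ 5)⁻¹)
        atTop (nhds 0) := by
      have := (((invpow_tendsto 1 one_ne_zero).const_mul ((1:ℝ)/2)).sub
        ((invpow_tendsto 3 three_ne_zero).const_mul ((1:ℝ)/4))).add
        ((invpow_tendsto 5 (by norm_num)).const_mul ((3:ℝ)/8))
      simpa using this
    simpa using exp_neg_sq_tendsto.mul hP
  · intro x hx
    have hne := ne_of_gt hx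
    have key : 1 - 2 * x * ((1/2) * (x ^ 1)⁻¹ - (1/4) * (x ^ 3)⁻¹ + (3/8) * (x ^ 5)⁻¹)
        + (-((1/2) * (x ^ 2)⁻¹) + (3/4) * (x ^ 4)⁻¹ - (15/8) * (x ^ 6)⁻¹)
        = -((15/8) * (x ^ 6)⁻¹) := by
      field_simp
      ring
    rw [key]
    simp only [neg_neg_iff_pos, Left.neg_neg_iff]
    positivity

lemma bound3 : ∀ x > (0:ℝ), Real.exp (-x ^ 2) *
    ((1/2) * (x ^ 1)⁻¹ - (1/4) * (x ^ 3)⁻¹ + (3/8) * (x ^ 5)⁻¹ - (15/16) * (x ^ 7)⁻¹) < II x := by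
  apply II_gt _ (fun x => -((1/2) * (x ^ 2)⁻¹) + (3/4) * (x ^ 4)⁻¹ - (15/8) * (x ^ 6)⁻¹
    + (105/16) * (x ^ 8)⁻¹)
  · intro x hx
    have hne := ne_of_gt hx
    have h1 := ((hasDerivAt_pow 1 x).inv (pow_ne_zero 1 hne)).const_mul ((1:ℝ)/2)
    have h3 := ((hasDerivAt_pow 3 x).inv (pow_ne_zero 3 hne)).const_mul ((1:ℝ)/4)
    have h5 := ((hasDerivAt_pow 5 x).inv (pow_ne_zero 5 hne)).const_mul ((3:ℝ)/8)
    have h7 := ((hasDerivAt_pow 7 x).inv (pow_ne_zero 7 hne)).const_mul ((15:ℝ)/16)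
    refine (((h1.sub h3).add h5).sub h7).congr_deriv ?_
    field_simp
    ring
  · have hP : Tendsto (fun x : ℝ => (1/2) * (x ^ 1)⁻¹ - (1/4) * (x ^ 3)⁻¹ + (3/8) * (x ^ 5)⁻¹
        - (15/16) * (x ^ 7)⁻¹) atTop (nhds 0) := by
      have := ((((invpow_tendsto 1 one_ne_zero).const_mul ((1:ℝ)/2)).sub
        ((invpow_tendsto 3 three_ne_zero).const_mul ((1:ℝ)/4))).add
        ((invpow_tendsto 5 (by norm_num)).const_mul ((3:ℝ)/8))).sub
        ((invpow_tendsto 7 (by norm_num)).const_mul ((15:ℝ)/16))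
      simpa using this
    simpa using exp_neg_sq_tendsto.mul hP
  · intro x hx
    have hne := ne_of_gt hx
    have key : 1 - 2 * x * ((1/2) * (x ^ 1)⁻¹ - (1/4) * (x ^ 3)⁻¹ + (3/8) * (x ^ 5)⁻¹
        - (15/16) * (x ^ 7)⁻¹)
        + (-((1/2) * (x ^ 2)⁻¹) + (3/4) * (x ^ 4)⁻¹ - (15/8) * (x ^ 6)⁻¹ + (105/16) * (x ^ 8)⁻¹)
        = (105/16) * (x ^ 8)⁻¹ := by
      field_simp
      ring
    rw [key]
    positivity

lemma erfc_eq (y : ℝ) : erfc y = 2 / Real.sqrt π * II y := rfl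

lemma erfc_hasDerivAt (x : ℝ) :
    HasDerivAt erfc (2 / Real.sqrt π * -(Real.exp (-x ^ 2))) x :=
  (II_hasDerivAt x).const_mul (2 / Real.sqrt π)

/-- The antiderivative: `F y = 2 y^{3/2} e^y erfc(√y) + (1-2y)/√π`. -/
noncomputable def F (y : ℝ) : ℝ :=
  2 * y * Real.sqrt y * Real.exp y * erfc (Real.sqrt y) + (1 - 2 * y) / Real.sqrt π

lemma sqrtpi_pos : 0 < Real.sqrt π := Real.sqrt_pos.2 Real.pi_pos

lemma F_hasDerivAt : ∀ y > (0:ℝ), HasDerivAt F (-(Real.sqrt y * Upsilon y)) y := by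
  intro y hy
  obtain ⟨s, hs, rfl⟩ : ∃ s, 0 < s ∧ s ^ 2 = y := ⟨Real.sqrt y, Real.sqrt_pos.2 hy, Real.sq_sqrt hy.le⟩
  have hne : (s:ℝ) ^ 2 ≠ 0 := by positivity
  have hsne : s ≠ 0 := ne_of_gt hs
  have hsq : HasDerivAt Real.sqrt (1 / (2 * Real.sqrt (s ^ 2))) (s ^ 2) :=
    Real.hasDerivAt_sqrt hne
  have hB : HasDerivAt (fun y => erfc (Real.sqrt y))
      ((2 / Real.sqrt π * -(Real.exp (-Real.sqrt (s ^ 2) ^ 2))) * (1 / (2 * Real.sqrt (s ^ 2))))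
      (s ^ 2) := (erfc_hasDerivAt (Real.sqrt (s ^ 2))).comp (s ^ 2) hsq
  have hA1 : HasDerivAt (fun y : ℝ => 2 * y) 2 (s ^ 2) := by
    simpa using (hasDerivAt_id (s ^ 2)).const_mul (2:ℝ)
  have hA2 := hA1.mul hsq
  have hA3 := hA2.mul (Real.hasDerivAt_exp (s ^ 2))
  have hAB := hA3.mul hB
  have hlin : HasDerivAt (fun y : ℝ => (1 - 2 * y) / Real.sqrt π) (-2 / Real.sqrt π) (s ^ 2) := by
    have : HasDerivAt (fun y : ℝ => 1 - 2 * y) (-2) (s ^ 2) := by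
      simpa using ((hasDerivAt_id (s ^ 2)).const_mul (2:ℝ)).const_sub 1
    exact this.div_const _
  have htot := hAB.add hlin
  have hF : F = fun y => (2 * y * Real.sqrt y * Real.exp y) * erfc (Real.sqrt y)
      + (1 - 2 * y) / Real.sqrt π := by
    funext y; simp [F]
  rw [hF]
  refine htot.congr_deriv ?_
  simp only [Pi.mul_apply]
  rw [Real.sqrt_sq hs.le, Upsilon]
  rw [Real.sqrt_sq hs.le]
  rw [show ((s:ℝ) ^ 2) ^ ((1:ℝ)/2) = s by
        rw [← Real.sqrt_eq_rpow, Real.sqrt_sq hs.le]]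
  rw [show ((s:ℝ) ^ 2) ^ (-(1/2) : ℝ) = s⁻¹ by
        rw [Real.rpow_neg (by positivity), ← Real.sqrt_eq_rpow, Real.sqrt_sq hs.le]]
  rw [Real.exp_neg]
  have hexpne : Real.exp (s ^ 2) ≠ 0 := (Real.exp_pos _).ne'
  field_simp
  ring

lemma sqrtpi_F (c : ℝ) (hc : 0 < c) :
    Real.sqrt π * F c = 4 * c * Real.sqrt c * Real.exp c * II (Real.sqrt c) + (1 - 2 * c) := by
  rw [F, erfc_eq]
  have h := sqrtpi_pos.ne'
  field_simp
  ring

lemma F_div (c : ℝ) : F c = Real.sqrt π * F c / Real.sqrt π := by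
  field_simp [sqrtpi_pos.ne']

lemma F_pos : ∀ c > (0:ℝ), 0 < F c := by
  intro c hc
  obtain ⟨s, hs, rfl⟩ : ∃ s, 0 < s ∧ s ^ 2 = c := ⟨Real.sqrt c, Real.sqrt_pos.2 hc, Real.sq_sqrt hc.le⟩
  have hb := bound1 s hs
  have hsπ := sqrtpi_F (s ^ 2) (by positivity)
  rw [Real.sqrt_sq hs.le] at hsπ
  set K := 4 * s ^ 2 * s * Real.exp (s ^ 2) with hK
  have hKpos : 0 < K := by positivity
  have hlhs : K * (Real.exp (-s ^ 2) * ((1/2) * (s ^ 1)⁻¹ - (1/4) * (s ^ 3)⁻¹)) = 2 * s ^ 2 - 1 := by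
    rw [hK, Real.exp_neg]
    have := (Real.exp_pos (s ^ 2)).ne'
    field_simp
    ring
  have h2 := mul_lt_mul_of_pos_left hb hKpos
  rw [hlhs] at h2
  have h3 : 0 < Real.sqrt π * F (s ^ 2) := by rw [hsπ]; linarith
  rw [F_div (s ^ 2)]
  positivity

lemma F_upper : ∀ c > (0:ℝ), Real.sqrt π * F c < 3 / (2 * c) := by
  intro c hc
  obtain ⟨s, hs, rfl⟩ : ∃ s, 0 < s ∧ s ^ 2 = c := ⟨Real.sqrt c, Real.sqrt_pos.2 hc, Real.sq_sqrt hc.le⟩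
  have hb := bound2 s hs
  have hsπ := sqrtpi_F (s ^ 2) (by positivity)
  rw [Real.sqrt_sq hs.le] at hsπ
  set K := 4 * s ^ 2 * s * Real.exp (s ^ 2) with hK
  have hKpos : 0 < K := by positivity
  have hlhs : K * (Real.exp (-s ^ 2) * ((1/2) * (s ^ 1)⁻¹ - (1/4) * (s ^ 3)⁻¹ + (3/8) * (s ^ 5)⁻¹))
      = 2 * s ^ 2 - 1 + 3 / (2 * s ^ 2) := by
    rw [hK, Real.exp_neg]
    have := (Real.exp_pos (s ^ 2)).ne'
    field_simp
    ring
  have h2 := mul_lt_mul_of_pos_left hb hKpos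
  rw [hlhs] at h2
  rw [hsπ]; linarith

lemma F_lower : ∀ c > (0:ℝ), 3 / (2 * c) - 15 / (4 * c ^ 2) < Real.sqrt π * F c := by
  intro c hc
  obtain ⟨s, hs, rfl⟩ : ∃ s, 0 < s ∧ s ^ 2 = c := ⟨Real.sqrt c, Real.sqrt_pos.2 hc, Real.sq_sqrt hc.le⟩
  have hb := bound3 s hs
  have hsπ := sqrtpi_F (s ^ 2) (by positivity)
  rw [Real.sqrt_sq hs.le] at hsπ
  set K := 4 * s ^ 2 * s * Real.exp (s ^ 2) with hK
  have hKpos : 0 < K := by positivity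
  have hlhs : K * (Real.exp (-s ^ 2) * ((1/2) * (s ^ 1)⁻¹ - (1/4) * (s ^ 3)⁻¹ + (3/8) * (s ^ 5)⁻¹
      - (15/16) * (s ^ 7)⁻¹))
      = 2 * s ^ 2 - 1 + 3 / (2 * s ^ 2) - 15 / (4 * (s ^ 2) ^ 2) := by
    rw [hK, Real.exp_neg]
    have := (Real.exp_pos (s ^ 2)).ne'
    field_simp
    ring
  have h2 := mul_lt_mul_of_pos_left hb hKpos
  rw [hlhs] at h2
  rw [hsπ]; linarith

lemma F_tendsto_zero : Tendsto F atTop (nhds 0) := by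
  have hup : Tendsto (fun c : ℝ => (3/2) * c⁻¹) atTop (nhds 0) := by
    simpa using tendsto_inv_atTop_zero.const_mul ((3:ℝ)/2)
  have hsq : Tendsto (fun c : ℝ => Real.sqrt π * F c) atTop (nhds 0) := by
    apply tendsto_of_tendsto_of_tendsto_of_le_of_le' (tendsto_const_nhds (x := (0:ℝ))) hup
    · filter_upwards [eventually_gt_atTop (0:ℝ)] with c hc
      exact le_of_lt (mul_pos sqrtpi_pos (F_pos c hc))
    · filter_upwards [eventually_gt_atTop (0:ℝ)] with c hc
      have := F_upper c hc
      have h : 3 / (2 * c) = (3/2) * c⁻¹ := by field_simp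
      linarith [h ▸ this]
  have := hsq.mul_const (Real.sqrt π)⁻¹
  simp only [zero_mul] at this
  apply this.congr
  intro c
  field_simp

lemma upsilon_tail : ∀ y > (0:ℝ),
    -(9 / (4 * Real.sqrt π)) * (y ^ 2)⁻¹ < Real.sqrt y * Upsilon y := by
  intro y hy
  obtain ⟨s, hs, rfl⟩ : ∃ s, 0 < s ∧ s ^ 2 = y := ⟨Real.sqrt y, Real.sqrt_pos.2 hy, Real.sq_sqrt hy.le⟩
  have hb := bound2 s hs
  rw [Upsilon, Real.sqrt_sq hs.le, erfc_eq]
  rw [show ((s:ℝ) ^ 2) ^ ((1:ℝ)/2) = s by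
        rw [← Real.sqrt_eq_rpow, Real.sqrt_sq hs.le]]
  rw [show ((s:ℝ) ^ 2) ^ (-(1/2) : ℝ) = s⁻¹ by
        rw [Real.rpow_neg (by positivity), ← Real.sqrt_eq_rpow, Real.sqrt_sq hs.le]]
  have hπ := sqrtpi_pos
  set M := 4 / Real.sqrt π * s * (s ^ 2 + 3/2) * Real.exp (s ^ 2) with hM
  have hMpos : 0 < M := by rw [hM]; positivity
  have key : s * (2 / Real.sqrt π * (s + s⁻¹)
      - 2 * (s ^ 2 + 3/2) * Real.exp (s ^ 2) * (2 / Real.sqrt π * II s))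
      = 2 / Real.sqrt π * (s ^ 2 + 1) - M * II s := by
    rw [hM]; field_simp; ring
  have hRHS : M * (Real.exp (-s ^ 2) * ((1/2) * (s ^ 1)⁻¹ - (1/4) * (s ^ 3)⁻¹ + (3/8) * (s ^ 5)⁻¹))
      = 2 / Real.sqrt π * (s ^ 2 + 1) + (9 / (4 * Real.sqrt π)) * ((s ^ 2) ^ 2)⁻¹ := by
    rw [hM, Real.exp_neg]
    have := (Real.exp_pos (s ^ 2)).ne'
    field_simp
    ring
  have h2 := mul_lt_mul_of_pos_left hb hMpos
  rw [hRHS] at h2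
  rw [key]
  linarith

lemma key_integral : ∀ a > (0:ℝ),
    IntegrableOn (fun y => Real.sqrt y * Upsilon y) (Set.Ioi a) volume ∧
      (∫ y in Set.Ioi a, Real.sqrt y * Upsilon y) = F a := by
  intro a ha
  have hπ := sqrtpi_pos
  set c9 : ℝ := 9 / (4 * Real.sqrt π) with hc9
  have hd1 : ∀ y ∈ Set.Ici a, HasDerivAt (fun y => -(F y) - c9 * y⁻¹)
      (Real.sqrt y * Upsilon y + c9 * (y ^ 2)⁻¹) y := by
    intro y hy
    have hy0 : 0 < y := lt_of_lt_of_le ha hy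
    have h1 := (F_hasDerivAt y hy0).neg
    have h2 := (hasDerivAt_inv hy0.ne').const_mul c9
    refine (h1.sub h2).congr_deriv ?_
    ring
  have hnn1 : ∀ y ∈ Set.Ioi a, 0 ≤ Real.sqrt y * Upsilon y + c9 * (y ^ 2)⁻¹ := by
    intro y hy
    have := upsilon_tail y (lt_trans ha hy)
    rw [hc9]
    linarith
  have hlim1 : Tendsto (fun y => -(F y) - c9 * y⁻¹) atTop (nhds 0) := by
    have := (F_tendsto_zero.neg).sub (tendsto_inv_atTop_zero.const_mul c9)
    simpa using this
  have hint1 := integrableOn_Ioi_deriv_of_nonneg' hd1 hnn1 hlim1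
  have hval1 := integral_Ioi_of_hasDerivAt_of_nonneg' hd1 hnn1 hlim1
  have hd2 : ∀ y ∈ Set.Ici a, HasDerivAt (fun y => -(c9 * y⁻¹)) (c9 * (y ^ 2)⁻¹) y := by
    intro y hy
    have hy0 : 0 < y := lt_of_lt_of_le ha hy
    have h2 := ((hasDerivAt_inv hy0.ne').const_mul c9).neg
    refine h2.congr_deriv ?_
    ring
  have hnn2 : ∀ y ∈ Set.Ioi a, 0 ≤ c9 * (y ^ 2)⁻¹ := by
    intro y hy
    have hy0 : 0 < y := lt_trans ha hy
    rw [hc9]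
    positivity
  have hlim2 : Tendsto (fun y => -(c9 * y⁻¹)) atTop (nhds 0) := by
    have := (tendsto_inv_atTop_zero.const_mul c9).neg
    simpa using this
  have hint2 := integrableOn_Ioi_deriv_of_nonneg' hd2 hnn2 hlim2
  have hval2 := integral_Ioi_of_hasDerivAt_of_nonneg' hd2 hnn2 hlim2
  have hfun : (fun y => Real.sqrt y * Upsilon y)
      = fun y => (Real.sqrt y * Upsilon y + c9 * (y ^ 2)⁻¹) - c9 * (y ^ 2)⁻¹ := by
    funext y; ring
  constructor
  · rw [hfun]
    exact hint1.sub hint2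
  · rw [hfun, MeasureTheory.integral_sub hint1 hint2, hval1, hval2]
    ring

lemma fFun_eq : ∀ u > (0:ℝ), fFun u = Real.sqrt π * u ^ 2 * F (3 * u / 2) := by
  intro u hu
  rw [fFun, (key_integral (3 * u / 2) (by linarith)).2]

lemma fFun_div_lt : ∀ u > (0:ℝ), fFun u / u < 1 := by
  intro u hu
  have hc : (0:ℝ) < 3 * u / 2 := by linarith
  have h : fFun u / u = (Real.sqrt π * F (3 * u / 2)) * u := by
    rw [fFun_eq u hu]
    field_simp
  rw [h]
  have := F_upper (3 * u / 2) hc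
  have h2 : 3 / (2 * (3 * u / 2)) = u⁻¹ := by field_simp
  rw [h2] at this
  calc (Real.sqrt π * F (3 * u / 2)) * u < u⁻¹ * u := by
        exact mul_lt_mul_of_pos_right this hu
    _ = 1 := by field_simp

lemma fFun_div_gt : ∀ u > (0:ℝ), 1 - (5/3) * u⁻¹ < fFun u / u := by
  intro u hu
  have hc : (0:ℝ) < 3 * u / 2 := by linarith
  have h : fFun u / u = (Real.sqrt π * F (3 * u / 2)) * u := by
    rw [fFun_eq u hu]
    field_simp
  rw [h]
  have := F_lower (3 * u / 2) hc
  have h2 : 3 / (2 * (3 * u / 2)) - 15 / (4 * (3 * u / 2) ^ 2) = u⁻¹ - (5/3) * (u^2)⁻¹ := by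
    field_simp
    ring
  rw [h2] at this
  have h3 := mul_lt_mul_of_pos_right this hu
  calc 1 - (5/3) * u⁻¹ = (u⁻¹ - (5/3) * (u^2)⁻¹) * u := by field_simp
    _ < _ := h3

end FFunAux

theorem fFun_properties :
    (∀ u > (0 : ℝ),
        IntegrableOn (fun y => Real.sqrt y * Upsilon y) (Set.Ioi (3 * u / 2)) volume) ∧
    ContinuousOn fFun (Set.Ioi 0) ∧
    (∀ u > (0 : ℝ), 0 < fFun u) ∧
    Tendsto (fun u => fFun u / u) atTop (nhds 1) := by
  refine ⟨?_, ?_, ?_, ?_⟩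
  · intro u hu
    exact (FFunAux.key_integral (3 * u / 2) (by linarith)).1
  · have hF : ContinuousOn FFunAux.F (Set.Ioi 0) := fun x hx =>
      (FFunAux.F_hasDerivAt x hx).continuousAt.continuousWithinAt
    have hmap : Set.MapsTo (fun u : ℝ => 3 * u / 2) (Set.Ioi 0) (Set.Ioi 0) := by
      intro u hu
      simp only [Set.mem_Ioi] at *
      linarith
    have hcomp : ContinuousOn (fun u : ℝ => Real.sqrt π * u ^ 2 * FFunAux.F (3 * u / 2))
        (Set.Ioi 0) := by
      apply ContinuousOn.mul
      · exact (continuous_const.mul (continuous_pow 2)).continuousOn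
      · exact hF.comp ((continuous_const.mul continuous_id).div_const 2).continuousOn hmap
    exact hcomp.congr fun u hu => FFunAux.fFun_eq u hu
  · intro u hu
    rw [FFunAux.fFun_eq u hu]
    exact mul_pos (mul_pos FFunAux.sqrtpi_pos (pow_pos hu 2))
      (FFunAux.F_pos (3 * u / 2) (by linarith))
  · have hlow : Tendsto (fun u : ℝ => 1 - (5/3) * u⁻¹) atTop (nhds 1) := by
      have := tendsto_inv_atTop_zero.const_mul ((5:ℝ)/3)
      have h2 := (tendsto_const_nhds (x := (1:ℝ))).sub this
      simpa using h2
    apply tendsto_of_tendsto_of_tendsto_of_le_of_le' hlow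
      (tendsto_const_nhds (x := (1:ℝ)))
    · filter_upwards [eventually_gt_atTop (0:ℝ)] with u hu
      exact (FFunAux.fFun_div_gt u hu).le
    · filter_upwards [eventually_gt_atTop (0:ℝ)] with u hu
      exact (FFunAux.fFun_div_lt u hu).le
end

section
/- Cycle lemma: let n ≥ 1 and let x_1, …, x_n be integers with x_i ≥ −1 for every i and x_1 + ⋯ + x_n = −1. Then there is exactly one index r ∈ {0, 1, …, n−1} such that the cyclic shift (x_{r+1}, …, x_n, x_1, …, x_r) has all of its proper partial sums nonnegative, i.e., x_{r+1} + ⋯ + x_{r+j} ≥ 0 for every 1 ≤ j ≤ n−1 (indices taken mod n). -/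
open Finset

theorem cycle_lemma (n : ℕ) (hn : 1 ≤ n) (x : ℕ → ℤ)
    (hx : ∀ i < n, -1 ≤ x i)
    (hsum : ∑ i ∈ Finset.range n, x i = -1) :
    ∃! r : ℕ, r < n ∧
      ∀ j : ℕ, 1 ≤ j → j ≤ n - 1 →
        0 ≤ ∑ k ∈ Finset.range j, x ((r + k) % n) := by
  classical
  set T : ℕ → ℤ := fun j => ∑ k ∈ Finset.range j, x (k % n) with hT
  have hTS : ∀ j ≤ n, T j = ∑ k ∈ Finset.range j, x k := by
    intro j hj
    exact Finset.sum_congr rfl fun k hk => by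
      rw [Nat.mod_eq_of_lt (lt_of_lt_of_le (Finset.mem_range.mp hk) hj)]
  have hT0 : T 0 = 0 := by simp [hT]
  have hTn : T n = -1 := by rw [hTS n le_rfl, hsum]
  have hTper : ∀ j, T (j + n) = T j - 1 := by
    intro j
    induction j with
    | zero => simpa [hT0] using hTn
    | succ j ih =>
      have h1 : T (j + 1 + n) = T (j + n) + x ((j + n) % n) := by
        rw [show j + 1 + n = (j + n) + 1 by ring]
        exact Finset.sum_range_succ _ _
      have h2 : T (j + 1) = T j + x (j % n) := Finset.sum_range_succ _ _
      rw [h1, ih, Nat.add_mod_right, h2]; ring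
  have hshift : ∀ r j, ∑ k ∈ Finset.range j, x ((r + k) % n) = T (r + j) - T r := by
    intro r j
    have h := Finset.sum_range_add (fun k => x (k % n)) r j
    have : T (r + j) = T r + ∑ k ∈ Finset.range j, x ((r + k) % n) := h
    linarith
  -- condition C
  have hC : ∀ r, (∀ j : ℕ, 1 ≤ j → j ≤ n - 1 →
      0 ≤ ∑ k ∈ Finset.range j, x ((r + k) % n)) ↔
      (∀ j : ℕ, 1 ≤ j → j ≤ n - 1 → T r ≤ T (r + j)) := by
    intro r
    constructor <;> intro h j h1 h2 <;> have := h j h1 h2 <;>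
      rw [hshift] at * <;> linarith
  -- key uniqueness lemma
  have key : ∀ a b, a < b → b < a + n →
      (∀ j : ℕ, 1 ≤ j → j ≤ n - 1 → T a ≤ T (a + j)) →
      (∀ j : ℕ, 1 ≤ j → j ≤ n - 1 → T b ≤ T (b + j)) → False := by
    intro a b hab hbn Ca Cb
    have h1 : T a ≤ T b := by
      have := Ca (b - a) (by omega) (by omega)
      rwa [show a + (b - a) = b by omega] at this
    have h2 : T b ≤ T (a + n) := by
      have := Cb (a + n - b) (by omega) (by omega)
      rwa [show b + (a + n - b) = a + n by omega] at this
    rw [hTper] at h2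
    linarith
  -- existence of first argmin
  have hP : ∃ i, i ≤ n ∧ ∀ j ≤ n, T i ≤ T j := by
    obtain ⟨i, hi, hmin⟩ := Finset.exists_min_image (Finset.range (n+1)) T
      ⟨n, Finset.mem_range.mpr (Nat.lt_succ_self n)⟩
    exact ⟨i, Nat.lt_succ_iff.mp (Finset.mem_range.mp hi),
      fun j hj => hmin j (Finset.mem_range.mpr (Nat.lt_succ_iff.mpr hj))⟩
  set r0 := Nat.find hP with hr0def
  obtain ⟨hr0n, hr0min⟩ := Nat.find_spec hP
  rw [← hr0def] at hr0n hr0min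
  have hstrict : ∀ i < r0, T r0 + 1 ≤ T i := by
    intro i hi
    have hne := Nat.find_min hP hi
    push_neg at hne
    obtain ⟨j, hj, hlt⟩ := hne (by omega)
    have h2 := hr0min j hj
    omega
  have hr0pos : 1 ≤ r0 := by
    by_contra h
    have h0 : r0 = 0 := by omega
    have := hr0min n le_rfl
    rw [h0, hT0, hTn] at this
    linarith
  set r : ℕ := if r0 = n then 0 else r0 with hrdef
  have hrn : r < n := by
    rw [hrdef]; split <;> omega
  have hCr : ∀ j : ℕ, 1 ≤ j → j ≤ n - 1 → T r ≤ T (r + j) := by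
    intro j h1 h2
    rw [hrdef]
    split
    · next heq =>
      simp only [Nat.zero_add]
      rw [hT0]
      have := hstrict j (by omega)
      rw [heq, hTn] at this
      linarith
    · next hne =>
      have hr0lt : r0 < n := lt_of_le_of_ne hr0n hne
      by_cases hc : r0 + j ≤ n
      · exact hr0min (r0 + j) hc
      · have := hstrict (r0 + j - n) (by omega)
        have heq : T (r0 + j) = T (r0 + j - n) - 1 := by
          have := hTper (r0 + j - n)
          rwa [show r0 + j - n + n = r0 + j by omega] at this
        linarith
  refine ⟨r, ⟨hrn, (hC r).mpr hCr⟩, ?_⟩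
  rintro r' ⟨hr'n, hCr'⟩
  rw [hC r'] at hCr'
  by_contra hne
  rcases lt_or_gt_of_ne hne with h | h
  · exact key r' r h (by omega) hCr' hCr
  · exact key r r' h (by omega) hCr hCr'
end
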